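/- Let α ≥ 0 and f(z) = 1/z − Σ_{n≥1} a_n z^n with a_n ≥ 0 and Σ_{n≥1} (1 + α(n+1)) a_n ≤ 1. Then for all z with |z| = r ∈ (0,1): 1/r − r/(1 + 2α) ≤ |f(z)| ≤ 1/r + r/(1 + 2α). -/

import Mathlib

open Complex

theorem stmt15 (α : ℝ) (hα : 0 ≤ α) (a : ℕ → ℝ) (ha : ∀ n, 0 ≤ a n)
    (hSum : Summable fun n : ℕ => (1 + α * (n + 2)) * a n)
    (hb : (∑' n : ℕ, (1 + α * (n + 2)) * a n) ≤ 1)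
    (f : ℂ → ℂ)
    (hf : ∀ z : ℂ, z ≠ 0 → f z = z⁻¹ - ∑' n : ℕ, (a n : ℂ) * z ^ (n + 1)) :
    ∀ (r : ℝ) (z : ℂ), 0 < r → r < 1 → ‖z‖ = r →
      1 / r - r / (1 + 2 * α) ≤ ‖f z‖ ∧
      ‖f z‖ ≤ 1 / r + r / (1 + 2 * α) := by
  intro r z hr hr1 hz
  have hz0 : z ≠ 0 := by
    intro h; rw [h, norm_zero] at hz; linarith
  have hfac : ∀ n : ℕ, (1 : ℝ) ≤ 1 + α * (n + 2) := by
    intro n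
    have : (0:ℝ) ≤ α * (n + 2) := by positivity
    linarith
  have hsa : Summable a := by
    apply hSum.of_nonneg_of_le ha
    intro n
    exact le_mul_of_one_le_left (ha n) (hfac n)
  have h2α : (0:ℝ) < 1 + 2 * α := by linarith
  have hA : (1 + 2 * α) * ∑' n, a n ≤ 1 := by
    rw [← tsum_mul_left]
    refine le_trans ((hsa.mul_left _).tsum_le_tsum ?_ hSum) hb
    intro n
    apply mul_le_mul_of_nonneg_right _ (ha n)
    have : (2:ℝ) ≤ (n:ℝ) + 2 := by
      have := Nat.cast_nonneg (α := ℝ) n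
      linarith
    nlinarith
  have hAs : ∑' n, a n ≤ 1 / (1 + 2 * α) := by
    rw [le_div_iff₀ h2α]; linarith [hA]
  have hnorm : ∀ n : ℕ, ‖(a n : ℂ) * z ^ (n + 1)‖ = a n * r ^ (n + 1) := by
    intro n
    rw [norm_mul, norm_pow, hz,
      Complex.norm_real, Real.norm_eq_abs, _root_.abs_of_nonneg (ha n)]
  have hbound : ∀ n : ℕ, ‖(a n : ℂ) * z ^ (n + 1)‖ ≤ a n * r := by
    intro n
    rw [hnorm n]
    apply mul_le_mul_of_nonneg_left _ (ha n)
    calc r ^ (n + 1) ≤ r ^ 1 :=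
          pow_le_pow_of_le_one (le_of_lt hr) (le_of_lt hr1) (by omega)
      _ = r := pow_one r
  have hsg : Summable fun n : ℕ => (a n : ℂ) * z ^ (n + 1) := by
    apply Summable.of_norm_bounded (hsa.mul_right r) hbound
  have hS : ‖∑' n : ℕ, (a n : ℂ) * z ^ (n + 1)‖ ≤ r / (1 + 2 * α) := by
    calc ‖∑' n : ℕ, (a n : ℂ) * z ^ (n + 1)‖
        ≤ ∑' n : ℕ, a n * r := tsum_of_norm_bounded (hsa.mul_right r).hasSum hbound
      _ = (∑' n, a n) * r := tsum_mul_right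
      _ ≤ (1 / (1 + 2 * α)) * r := by
          apply mul_le_mul_of_nonneg_right hAs (le_of_lt hr)
      _ = r / (1 + 2 * α) := by ring
  have hinv : ‖z⁻¹‖ = 1 / r := by
    rw [norm_inv, hz, one_div]
  rw [hf z hz0]
  set S := ∑' n : ℕ, (a n : ℂ) * z ^ (n + 1)
  have hSabs : ‖S‖ ≤ r / (1 + 2 * α) := hS
  constructor
  · calc 1 / r - r / (1 + 2 * α) ≤ ‖z⁻¹‖ - ‖S‖ := by
          rw [hinv]; linarith
      _ ≤ ‖z⁻¹ - S‖ := by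
          simpa using norm_sub_norm_le z⁻¹ S
  · calc ‖z⁻¹ - S‖ ≤ ‖z⁻¹‖ + ‖S‖ := by
          simpa using norm_sub_le z⁻¹ S
      _ ≤ 1 / r + r / (1 + 2 * α) := by rw [hinv]; linarith
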